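/- Let μ be a probability measure on a measurable space Ω, let f : ℝ → ℝ be convex with f(1) = 0, and let δ > 0. Let r ∈ U_f and let A ⊆ Ω be measurable with 0 < μ(A) < 1. Define r̄ : Ω → [0,∞) by r̄ = (1/μ(A))·∫_A r dμ on A and r̄ = (1/μ(Ω∖A))·∫_{Ω∖A} r dμ on Ω∖A (the conditional averages of r on A and its complement). Then r̄ ∈ U_f and ∫_A r̄ dμ = ∫_A r dμ; that is, replacing an adversarial density ratio by its conditional averages over the error set and its complement preserves both the f-divergence feasibility and the value of the adversarially weighted 0-1 risk. -/

import Mathlib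

open MeasureTheory
open scoped Classical

/-- The uncertainty set of density ratios: measurable, nonnegative functions `r` with
`∫ f (r ω) ∂μ ≤ δ` and `∫ r ω ∂μ = 1` (both integrals existing). -/
def Uf {Ω : Type*} [MeasurableSpace Ω] (μ : Measure Ω) (f : ℝ → ℝ) (δ : ℝ) :
    Set (Ω → ℝ) :=
  {r | Measurable r ∧ (∀ ω, 0 ≤ r ω) ∧
    Integrable (fun ω => f (r ω)) μ ∧ Integrable r μ ∧
    (∫ ω, f (r ω) ∂μ) ≤ δ ∧ (∫ ω, r ω ∂μ) = 1}

/-- Replacing an adversarial density ratio by its conditional averages over the error set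
`A` and its complement keeps it in the uncertainty set and preserves the adversarially
weighted 0-1 risk `∫_A r dμ`. -/
theorem stmt15 {Ω : Type*} [MeasurableSpace Ω] (μ : Measure Ω) [IsProbabilityMeasure μ]
    (f : ℝ → ℝ) (hconv : ConvexOn ℝ Set.univ f) (hf1 : f 1 = 0)
    (δ : ℝ) (hδ : 0 < δ) (r : Ω → ℝ) (hr : r ∈ Uf μ f δ)
    (A : Set Ω) (hA : MeasurableSet A) (h0 : 0 < μ A) (h1 : μ A < 1) :
    let rbar : Ω → ℝ := fun ω =>
      if ω ∈ A then (∫ x in A, r x ∂μ) / (μ A).toReal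
      else (∫ x in Aᶜ, r x ∂μ) / (μ Aᶜ).toReal
    rbar ∈ Uf μ f δ ∧ (∫ ω in A, rbar ω ∂μ) = ∫ ω in A, r ω ∂μ := by
  intro rbar
  obtain ⟨hrm, hrnn, hfint, hrint, hfle, hrint1⟩ := hr
  set a : ℝ := (∫ x in A, r x ∂μ) / (μ A).toReal with ha
  set b : ℝ := (∫ x in Aᶜ, r x ∂μ) / (μ Aᶜ).toReal with hb
  have hμA : μ A ≠ ⊤ := (measure_lt_top μ A).ne
  have hμAc : μ Aᶜ ≠ ⊤ := (measure_lt_top μ Aᶜ).ne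
  have hAc0 : μ Aᶜ ≠ 0 := by
    rw [measure_compl hA hμA]
    simp only [measure_univ]
    intro h
    exact absurd (tsub_eq_zero_iff_le.mp h) (not_le.mpr h1)
  have hA0' : (μ A).toReal > 0 := ENNReal.toReal_pos h0.ne' hμA
  have hAc0' : (μ Aᶜ).toReal > 0 := ENNReal.toReal_pos hAc0 hμAc
  have hrbar : rbar = fun ω => Set.indicator A (fun _ => a) ω +
      Set.indicator Aᶜ (fun _ => b) ω := by
    funext ω
    by_cases h : ω ∈ A <;> simp [rbar, h, Set.indicator_of_mem, Set.indicator_of_notMem, ← ha, ← hb]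
  have hfrbar : (fun ω => f (rbar ω)) = fun ω => Set.indicator A (fun _ => f a) ω +
      Set.indicator Aᶜ (fun _ => f b) ω := by
    funext ω
    by_cases h : ω ∈ A <;> simp [rbar, h, ← ha, ← hb]
  have hmeas : Measurable rbar := Measurable.ite hA measurable_const measurable_const
  have hint_rbar : Integrable rbar μ := by
    rw [hrbar]
    exact ((integrable_const a).indicator hA).add ((integrable_const b).indicator hA.compl)
  have hint_frbar : Integrable (fun ω => f (rbar ω)) μ := by
    rw [hfrbar]
    exact ((integrable_const (f a)).indicator hA).add
      ((integrable_const (f b)).indicator hA.compl)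
  -- restricted measures
  have hrA : Integrable r (μ.restrict A) := hrint.restrict
  have hrAc : Integrable r (μ.restrict Aᶜ) := hrint.restrict
  -- nonnegativity
  have hintA_nn : 0 ≤ ∫ x in A, r x ∂μ := integral_nonneg fun x => hrnn x
  have hintAc_nn : 0 ≤ ∫ x in Aᶜ, r x ∂μ := integral_nonneg fun x => hrnn x
  have hann : 0 ≤ a := div_nonneg hintA_nn hA0'.le
  have hbnn : 0 ≤ b := div_nonneg hintAc_nn hAc0'.le
  have hrbarnn : ∀ ω, 0 ≤ rbar ω := by
    intro ω; by_cases h : ω ∈ A <;> simp [rbar, h, hann, hbnn, ← ha, ← hb]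
  -- integral of rbar
  have hsplit : (∫ ω, rbar ω ∂μ) = a * (μ A).toReal + b * (μ Aᶜ).toReal := by
    rw [hrbar, integral_add ((integrable_const a).indicator hA)
      ((integrable_const b).indicator hA.compl),
      integral_indicator_const _ hA, integral_indicator_const _ hA.compl,
      smul_eq_mul, smul_eq_mul, measureReal_def, measureReal_def]
    ring
  have hAint : a * (μ A).toReal = ∫ x in A, r x ∂μ := by
    rw [ha]; field_simp
  have hAcint : b * (μ Aᶜ).toReal = ∫ x in Aᶜ, r x ∂μ := by
    rw [hb]; field_simp
  have hint1 : (∫ ω, rbar ω ∂μ) = 1 := by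
    rw [hsplit, hAint, hAcint, integral_add_compl hA hrint, hrint1]
  -- Jensen on each piece
  have hcont : ContinuousOn f Set.univ := hconv.continuousOn isOpen_univ
  have neA : NeZero (μ.restrict A) := ⟨by
    simp [Measure.restrict_eq_zero, h0.ne']⟩
  have neAc : NeZero (μ.restrict Aᶜ) := ⟨by
    simp [Measure.restrict_eq_zero, hAc0]⟩
  have jensenA : f a ≤ (μ A).toReal⁻¹ * ∫ x in A, f (r x) ∂μ := by
    have := hconv.map_average_le hcont isClosed_univ
      (Filter.Eventually.of_forall fun x => Set.mem_univ (r x)) hrA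
      (hfint.restrict (s := A))
    rw [setAverage_eq, setAverage_eq] at this
    simpa [ha, div_eq_inv_mul, smul_eq_mul, measureReal_def] using this
  have jensenAc : f b ≤ (μ Aᶜ).toReal⁻¹ * ∫ x in Aᶜ, f (r x) ∂μ := by
    have := hconv.map_average_le hcont isClosed_univ
      (Filter.Eventually.of_forall fun x => Set.mem_univ (r x)) hrAc
      (hfint.restrict (s := Aᶜ))
    rw [setAverage_eq, setAverage_eq] at this
    simpa [hb, div_eq_inv_mul, smul_eq_mul, measureReal_def] using this
  have hfsplit : (∫ ω, f (rbar ω) ∂μ) = f a * (μ A).toReal + f b * (μ Aᶜ).toReal := by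
    rw [hfrbar, integral_add ((integrable_const (f a)).indicator hA)
      ((integrable_const (f b)).indicator hA.compl),
      integral_indicator_const _ hA, integral_indicator_const _ hA.compl,
      smul_eq_mul, smul_eq_mul, measureReal_def, measureReal_def]
    ring
  have hfle' : (∫ ω, f (rbar ω) ∂μ) ≤ δ := by
    rw [hfsplit]
    have h1' : f a * (μ A).toReal ≤ ∫ x in A, f (r x) ∂μ := by
      have := mul_le_mul_of_nonneg_right jensenA hA0'.le
      rwa [inv_mul_eq_div, div_mul_cancel₀ _ hA0'.ne'] at this
    have h2' : f b * (μ Aᶜ).toReal ≤ ∫ x in Aᶜ, f (r x) ∂μ := by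
      have := mul_le_mul_of_nonneg_right jensenAc hAc0'.le
      rwa [inv_mul_eq_div, div_mul_cancel₀ _ hAc0'.ne'] at this
    calc f a * (μ A).toReal + f b * (μ Aᶜ).toReal
        ≤ (∫ x in A, f (r x) ∂μ) + ∫ x in Aᶜ, f (r x) ∂μ := add_le_add h1' h2'
      _ = ∫ ω, f (r ω) ∂μ := integral_add_compl hA hfint
      _ ≤ δ := hfle
  refine ⟨⟨hmeas, hrbarnn, hint_frbar, hint_rbar, hfle', hint1⟩, ?_⟩
  have : (∫ ω in A, rbar ω ∂μ) = a * (μ A).toReal := by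
    have : ∀ ω ∈ A, rbar ω = a := fun ω h => by simp [rbar, h, ← ha]
    rw [setIntegral_congr_fun hA this, setIntegral_const, smul_eq_mul, measureReal_def, mul_comm]
  rw [this, hAint]
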